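/- Let A be a bounded operator on a complex Hilbert space H satisfying Re⟨u, Au⟩ ≥ c‖u‖² for all u ∈ H, with some constant c > 0. Then 1 + A is boundedly invertible, and the Cayley-type transform (1−A)(1+A)^{-1} is a strict contraction with the explicit bound ‖(1−A)(1+A)^{-1}‖ ≤ (1 + 2c/(1 + ‖A‖²))^{−1/2} < 1. -/

import Mathlib

/-- If `A` is bounded on a complex Hilbert space with `Re⟨u, Au⟩ ≥ c‖u‖²`, `c > 0`,
then `1 + A` is boundedly invertible and the Cayley transform `(1-A)(1+A)⁻¹` is a
strict contraction with `‖(1-A)(1+A)⁻¹‖ ≤ (1 + 2c/(1+‖A‖²))^{-1/2} < 1`. -/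
theorem cayley_transform_strict_contraction
    {H : Type*} [NormedAddCommGroup H] [InnerProductSpace ℂ H] [CompleteSpace H]
    (A : H →L[ℂ] H) (c : ℝ) (hc : 0 < c)
    (hA : ∀ u : H, c * ‖u‖ ^ 2 ≤ (inner ℂ u (A u) : ℂ).re) :
    ∃ B : H →L[ℂ] H, (1 + A) ∘L B = 1 ∧ B ∘L (1 + A) = 1 ∧
      ‖(1 - A) ∘L B‖ ≤ (1 + 2 * c / (1 + ‖A‖ ^ 2)) ^ (-(1/2 : ℝ)) ∧
      (1 + 2 * c / (1 + ‖A‖ ^ 2)) ^ (-(1/2 : ℝ)) < 1 := by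
  set T : H →L[ℂ] H := 1 + A with hT
  have hre : ∀ u : H, c * ‖u‖ ^ 2 ≤ RCLike.re (inner ℂ u (A u) : ℂ) := by
    simpa using hA
  have hMpos : (0:ℝ) < 1 + ‖A‖ ^ 2 := by positivity
  set M : ℝ := 1 + ‖A‖ ^ 2 with hM
  set t : ℝ := 1 + 2 * c / M with ht
  have htgt : 1 < t := by
    rw [ht]
    have : 0 < 2 * c / M := by positivity
    linarith
  have hcoer : ∀ u : H, (1 + c) * ‖u‖ ^ 2 ≤ RCLike.re (inner ℂ u (T u) : ℂ) := by
    intro u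
    have h0 : (inner ℂ u (T u) : ℂ) = inner ℂ u u + inner ℂ u (A u) := by
      simp [hT, inner_add_right]
    rw [h0, map_add, inner_self_eq_norm_sq (𝕜 := ℂ) u]
    have := hre u
    linarith
  have hlow : ∀ u : H, (1 + c) * ‖u‖ ≤ ‖T u‖ := by
    intro u
    have h1 := hcoer u
    have h2 : RCLike.re (inner ℂ u (T u) : ℂ) ≤ ‖u‖ * ‖T u‖ := by
      calc RCLike.re (inner ℂ u (T u) : ℂ) ≤ ‖(inner ℂ u (T u) : ℂ)‖ := RCLike.re_le_norm _
        _ ≤ ‖u‖ * ‖T u‖ := norm_inner_le_norm u (T u)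
    rcases eq_or_lt_of_le (norm_nonneg u) with h | h
    · simp [← h]
    · have h3 : (1 + c) * ‖u‖ * ‖u‖ ≤ ‖u‖ * ‖T u‖ := by nlinarith
      exact le_of_mul_le_mul_left (by nlinarith : ‖u‖ * ((1 + c) * ‖u‖) ≤ ‖u‖ * ‖T u‖) h
  have hinj : LinearMap.ker (T : H →ₗ[ℂ] H) = ⊥ := by
    rw [LinearMap.ker_eq_bot']
    intro u hu
    have := hlow u
    rw [show T u = 0 from hu] at this
    simp only [norm_zero] at this
    have h4 : ‖u‖ ≤ 0 := by nlinarith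
    simpa using le_antisymm h4 (norm_nonneg u)
  have hanti : AntilipschitzWith (Real.toNNReal ((1+c)⁻¹)) T := by
    apply ContinuousLinearMap.antilipschitz_of_bound
    intro x
    rw [Real.coe_toNNReal _ (by positivity)]
    rw [le_inv_mul_iff₀ (by positivity : (0:ℝ) < 1 + c)]
    exact hlow x
  have hclosed : IsClosed (LinearMap.range (T : H →ₗ[ℂ] H) : Set H) := by
    have : IsClosed (Set.range T) := hanti.isClosed_range T.uniformContinuous
    simpa [LinearMap.coe_range] using this
  have hsurj : LinearMap.range (T : H →ₗ[ℂ] H) = ⊤ := by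
    haveI : CompleteSpace (LinearMap.range (T : H →ₗ[ℂ] H)) := hclosed.completeSpace_coe
    rw [← Submodule.orthogonal_eq_bot_iff (K := LinearMap.range (T : H →ₗ[ℂ] H))]
    rw [Submodule.eq_bot_iff]
    intro v hv
    have h0 : (inner ℂ (T v) v : ℂ) = 0 := hv (T v) ⟨v, rfl⟩
    have h0' : (inner ℂ v (T v) : ℂ) = 0 := by
      rw [← inner_conj_symm, h0, map_zero]
    have h1 := hcoer v
    rw [h0', map_zero] at h1
    have h5 : ‖v‖ = 0 := by nlinarith [sq_nonneg ‖v‖, norm_nonneg v]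
    simpa using h5
  let E := ContinuousLinearEquiv.ofBijective T hinj hsurj
  have hE : ∀ w : H, E w = T w := fun w => by
    simp [E, ContinuousLinearEquiv.coe_ofBijective]
  refine ⟨(E.symm : H →L[ℂ] H), ?_, ?_, ?_, ?_⟩
  · ext v
    have : E (E.symm v) = v := E.apply_symm_apply v
    rw [hE] at this
    simpa [hT] using this
  · ext v
    have : E.symm (E v) = v := E.symm_apply_apply v
    rw [hE] at this
    simpa [hT] using this
  · have hkey : ∀ u : H, t * ‖(1 - A) u‖ ^ 2 ≤ ‖T u‖ ^ 2 := by
      intro u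
      have e1 : ‖T u‖ ^ 2 = ‖u‖ ^ 2 + 2 * RCLike.re (inner ℂ u (A u) : ℂ) + ‖A u‖ ^ 2 := by
        have h6 : T u = u + A u := by simp [hT]
        rw [h6]
        exact norm_add_sq (𝕜 := ℂ) u (A u)
      have e2 : ‖(1 - A) u‖ ^ 2 = ‖u‖ ^ 2 - 2 * RCLike.re (inner ℂ u (A u) : ℂ) + ‖A u‖ ^ 2 := by
        have h7 : (1 - A) u = u - A u := by simp
        rw [h7]
        exact norm_sub_sq (𝕜 := ℂ) u (A u)
      have hr : c * ‖u‖ ^ 2 ≤ RCLike.re (inner ℂ u (A u) : ℂ) := hre u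
      have hAu : ‖A u‖ ≤ ‖A‖ * ‖u‖ := A.le_opNorm u
      have hAu2 : ‖A u‖ ^ 2 ≤ ‖A‖ ^ 2 * ‖u‖ ^ 2 := by
        nlinarith [norm_nonneg (A u), norm_nonneg A, norm_nonneg u]
      have hrnn : 0 ≤ RCLike.re (inner ℂ u (A u) : ℂ) := le_trans (by positivity) hr
      rw [e1, e2, ht, div_eq_mul_inv]
      have key : 2 * c * M⁻¹ * (‖u‖ ^ 2 - 2 * RCLike.re (inner ℂ u (A u) : ℂ) + ‖A u‖ ^ 2)
          ≤ 4 * RCLike.re (inner ℂ u (A u) : ℂ) := by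
        have hs : ‖u‖ ^ 2 - 2 * RCLike.re (inner ℂ u (A u) : ℂ) + ‖A u‖ ^ 2 ≤ M * ‖u‖ ^ 2 := by
          rw [hM]; nlinarith
        have h1 : 2 * c * M⁻¹ * (‖u‖ ^ 2 - 2 * RCLike.re (inner ℂ u (A u) : ℂ) + ‖A u‖ ^ 2)
            ≤ 2 * c * M⁻¹ * (M * ‖u‖ ^ 2) := by
          apply mul_le_mul_of_nonneg_left hs; positivity
        have h2 : 2 * c * M⁻¹ * (M * ‖u‖ ^ 2) = 2 * c * ‖u‖ ^ 2 := by
          field_simp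
        nlinarith
      nlinarith
    have ht0 : (0:ℝ) < t := lt_trans one_pos htgt
    have hst : (0:ℝ) < Real.sqrt t := Real.sqrt_pos.mpr ht0
    have hks : t ^ (-(1/2:ℝ)) = (Real.sqrt t)⁻¹ := by
      rw [Real.rpow_neg ht0.le, Real.sqrt_eq_rpow]
    rw [hks]
    apply ContinuousLinearMap.opNorm_le_bound _ (by positivity)
    intro v
    set u : H := E.symm v with hu
    have hTu : T u = v := by rw [← hE]; exact E.apply_symm_apply v
    have hcomp : ((1 - A) ∘L (E.symm : H →L[ℂ] H)) v = (1 - A) u := rfl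
    rw [hcomp]
    have h1 : t * ‖(1 - A) u‖ ^ 2 ≤ ‖v‖ ^ 2 := by
      have := hkey u
      rwa [hTu] at this
    rw [le_inv_mul_iff₀ hst]
    calc Real.sqrt t * ‖(1 - A) u‖
        = Real.sqrt (t * ‖(1 - A) u‖ ^ 2) := by
          rw [Real.sqrt_mul ht0.le, Real.sqrt_sq (norm_nonneg _)]
      _ ≤ Real.sqrt (‖v‖ ^ 2) := Real.sqrt_le_sqrt h1
      _ = ‖v‖ := Real.sqrt_sq (norm_nonneg v)
  · exact Real.rpow_lt_one_of_one_lt_of_neg htgt (by norm_num)
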